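/- In the ring of formal power series in x,y,z with coefficients in ℚ[t], one has (1 − yz)·P(t,x,y,z) = 2y·( P(t,x,z) − Q(t,x,y,z) ), where P(t,x,y,z) := Σ_{n,d} Σ_{1≤i<j≤n−1} 2·p_{n,d}(i,j) t^d x^n y^i z^j/((j−i−1)!(n−j+i−2)!), P(t,x,z) := Σ_{n≥3} Σ_d Σ_{2≤u≤n−1} p_{n,d}(1,u) t^d x^n z^u/((u−2)!(n−u−1)!), and Q(t,x,y,z) := Σ_{n≥3} Σ_d Σ_{2≤u≤n−1} p_{n,d}(1,u) t^d x^n y^{n−u} z^n/((u−2)!(n−u−1)!). -/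

import Mathlib

/-- The word `π₁π₂⋯πₙ` of a permutation of `[n] = {1, …, n}`. -/
def permWord (n : ℕ) (π : Equiv.Perm (Fin n)) : ℕ → ℕ :=
  fun i => if h : i < n then (π ⟨i, h⟩ : ℕ) + 1 else 0

/-- The number of descents of a permutation of `[n]`. -/
def desNum (n : ℕ) (π : Equiv.Perm (Fin n)) : ℕ :=
  ((Finset.range (n - 1)).filter (fun i => permWord n π (i + 1) < permWord n π i)).card

/-- Cyclic descent number: the number of points `x` with `c x < x`. -/
def cdes {n : ℕ} (c : Equiv.Perm (Fin n)) : ℕ :=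
  (Finset.univ.filter (fun x : Fin n => c x < x)).card

/-- Cyclic ascent number: the number of points `x` with `x < c x`. -/
def casc {n : ℕ} (c : Equiv.Perm (Fin n)) : ℕ :=
  (Finset.univ.filter (fun x : Fin n => x < c x)).card

/-- `M(π) = Σ_c min(cdes c, casc c)` over all cycles `c` of `π`. -/
def Mstat {n : ℕ} (π : Equiv.Perm (Fin n)) : ℕ :=
  ∑ c ∈ π.cycleFactorsFinset, min (cdes c) (casc c)

/-- `π` has the three-letter word `a b c` (with `a ≠ c`) as a cyclic factor. -/
def HasCyclicFactor (n : ℕ) (π : Equiv.Perm (Fin n)) (a b c : ℕ) : Prop :=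
  ∃ x y z : Fin n, (x : ℕ) + 1 = a ∧ (y : ℕ) + 1 = b ∧ (z : ℕ) + 1 = c ∧ π x = y ∧ π y = z

/-- `p_{n,d}(i,j)`: odd order permutations of length `n` with `M(π) = d` having
`i n j` as a cyclic factor. -/
noncomputable def oddOrderCyclicCount (n d i j : ℕ) : ℕ :=
  Nat.card {π : Equiv.Perm (Fin n) //
    (∀ m ∈ π.cycleType, Odd m) ∧ Mstat π = d ∧ HasCyclicFactor n π i n j}

/-- Formal power series in `x` (index 0), `y` (index 1) and `z` (index 2)
with coefficients in `ℚ[t]`. -/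
abbrev PS3 : Type := MvPowerSeries (Fin 3) (Polynomial ℚ)

/-- `P(t,x,y,z) = Σ_{n,d} Σ_{1≤i<j≤n-1} 2·p_{n,d}(i,j) t^d x^n y^i z^j/((j-i-1)!(n-j+i-2)!)`. -/
noncomputable def PGF4 : PS3 := fun e =>
  if 1 ≤ e 1 ∧ e 1 + 1 ≤ e 2 ∧ e 2 + 1 ≤ e 0 then
    (((e 2 - e 1 - 1).factorial * (e 0 - e 2 + e 1 - 2).factorial : ℕ) : ℚ)⁻¹ •
      ∑ d ∈ Finset.range (e 0 + 1),
        ((2 * oddOrderCyclicCount (e 0) d (e 1) (e 2) : ℕ) : Polynomial ℚ) * Polynomial.X ^ d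
  else 0

/-- `P(t,x,z) = Σ_{n≥3} Σ_d Σ_{2≤u≤n-1} p_{n,d}(1,u) t^d x^n z^u/((u-2)!(n-u-1)!)`,
viewed in the variables `x,y,z` (no `y`). -/
noncomputable def PGF2 : PS3 := fun e =>
  if e 1 = 0 ∧ 3 ≤ e 0 ∧ 2 ≤ e 2 ∧ e 2 + 1 ≤ e 0 then
    (((e 2 - 2).factorial * (e 0 - e 2 - 1).factorial : ℕ) : ℚ)⁻¹ •
      ∑ d ∈ Finset.range (e 0 + 1),
        (oddOrderCyclicCount (e 0) d 1 (e 2) : Polynomial ℚ) * Polynomial.X ^ d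
  else 0

/-- `Q(t,x,y,z) = Σ_{n≥3} Σ_d Σ_{2≤u≤n-1} p_{n,d}(1,u) t^d x^n y^{n-u} z^n/((u-2)!(n-u-1)!)`. -/
noncomputable def QGF : PS3 := fun e =>
  if e 2 = e 0 ∧ 3 ≤ e 0 ∧ 1 ≤ e 1 ∧ e 1 + 2 ≤ e 0 then
    (((e 0 - e 1 - 2).factorial * (e 1 - 1).factorial : ℕ) : ℚ)⁻¹ •
      ∑ d ∈ Finset.range (e 0 + 1),
        (oddOrderCyclicCount (e 0) d 1 (e 0 - e 1) : Polynomial ℚ) * Polynomial.X ^ d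
  else 0

/-- `(1 - yz)·P(t,x,y,z) = 2y·(P(t,x,z) - Q(t,x,y,z))`. -/



def rot (n : ℕ) : Equiv.Perm (Fin n) where
  toFun v := ⟨if (v:ℕ) + 1 = n then (v:ℕ) else if (v:ℕ) = 0 then n-2 else (v:ℕ)-1,
    by have := v.isLt; split_ifs <;> omega⟩
  invFun w := ⟨if (w:ℕ) + 1 = n then (w:ℕ) else if (w:ℕ) + 2 = n then 0 else (w:ℕ)+1,
    by have := w.isLt; split_ifs <;> omega⟩
  left_inv v := by
    have := v.isLt; apply Fin.ext; simp only [Fin.val_mk]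
    split_ifs <;> first | contradiction | omega
  right_inv w := by
    have := w.isLt; apply Fin.ext; simp only [Fin.val_mk]
    split_ifs <;> first | contradiction | omega

lemma rot_val {n : ℕ} (v : Fin n) :
    ((rot n) v : ℕ) = if (v:ℕ) + 1 = n then (v:ℕ) else if (v:ℕ) = 0 then n-2 else (v:ℕ)-1 := by
  simp only [rot, Equiv.coe_fn_mk]

lemma rot_lt_iff {n : ℕ} (v w : Fin n) (hv : (v:ℕ) ≠ 0) (hw : (w:ℕ) ≠ 0) :
    (rot n) v < (rot n) w ↔ v < w := by
  have h1 := v.isLt; have h2 := w.isLt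
  rw [Fin.lt_def, Fin.lt_def, rot_val, rot_val]
  split_ifs <;> omega

lemma casc_eq_cdes_inv {n : ℕ} (c : Equiv.Perm (Fin n)) : casc c = cdes c⁻¹ := by
  unfold casc cdes
  apply Finset.card_equiv c
  intro x
  simp

lemma cdes_conj {n : ℕ} (hn : 2 ≤ n) (h0n : 0 < n) (hn1 : n - 1 < n) (c : Equiv.Perm (Fin n))
    (h1 : c ⟨0, h0n⟩ ≠ ⟨n-1, hn1⟩) (h2 : c ⟨n-1, hn1⟩ ≠ ⟨0, h0n⟩) :
    cdes (rot n * c * (rot n)⁻¹) = cdes c := by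
  have step1 : cdes (rot n * c * (rot n)⁻¹)
      = (Finset.univ.filter (fun u : Fin n => rot n (c u) < rot n u)).card := by
    unfold cdes
    refine (Finset.card_equiv (rot n) ?_).symm
    intro u
    rw [Finset.mem_filter, Finset.mem_filter]
    simp [Equiv.Perm.mul_apply]
  rw [step1]
  unfold cdes
  by_cases hc0 : c ⟨0, h0n⟩ = ⟨0, h0n⟩
  · congr 1
    apply Finset.filter_congr
    intro u _
    by_cases hu : (u:ℕ) = 0
    · have hu' : u = ⟨0, h0n⟩ := Fin.ext hu
      rw [hu', hc0]
      simp
    · have hcu : ((c u : Fin n) : ℕ) ≠ 0 := by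
        intro h
        exact hu (congrArg Fin.val (c.injective (show c u = c ⟨0, h0n⟩ by rw [hc0]; exact Fin.ext h)))
      exact rot_lt_iff _ _ hcu hu
  · obtain ⟨u1, hu1⟩ : ∃ u1, c u1 = ⟨0, h0n⟩ := ⟨c⁻¹ _, Equiv.apply_symm_apply c _⟩
    have hu1ne : (u1:ℕ) ≠ 0 := by
      intro h
      have he : u1 = ⟨0, h0n⟩ := Fin.ext h
      rw [he] at hu1
      exact hc0 hu1
    have hu1nl : (u1:ℕ) ≠ n-1 := by
      intro h
      have he : u1 = ⟨n-1, hn1⟩ := Fin.ext h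
      rw [he] at hu1
      exact h2 hu1
    have hc0ne : ((c ⟨0, h0n⟩ : Fin n) : ℕ) ≠ 0 := fun h => hc0 (Fin.ext h)
    have hc0nl : ((c ⟨0, h0n⟩ : Fin n) : ℕ) ≠ n-1 := fun h => h1 (Fin.ext h)
    have hset : Finset.univ.filter (fun u : Fin n => rot n (c u) < rot n u)
        = insert ⟨0, h0n⟩
            ((Finset.univ.filter (fun u : Fin n => c u < u)).erase u1) := by
      ext u
      simp only [Finset.mem_filter, Finset.mem_univ, true_and, Finset.mem_insert,
        Finset.mem_erase]
      by_cases h : u = ⟨0, h0n⟩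
      · rw [h]
        have hlt : rot n (c ⟨0, h0n⟩) < rot n ⟨0, h0n⟩ := by
          rw [Fin.lt_def, rot_val, rot_val]
          have h3 := (c ⟨0, h0n⟩ : Fin n).isLt
          simp only [Fin.val_mk]
          split_ifs <;> omega
        simp [hlt]
      · by_cases h' : u = u1
        · rw [h']
          have hlt : ¬ (rot n (c u1) < rot n u1) := by
            rw [hu1, Fin.lt_def, rot_val, rot_val]
            have h3 := u1.isLt
            simp only [Fin.val_mk]
            split_ifs <;> omega
          have hne : u1 ≠ ⟨0, h0n⟩ := fun hh => hu1ne (congrArg Fin.val hh)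
          simp [hlt, hne]
        · have huv : (u:ℕ) ≠ 0 := fun hh => h (Fin.ext hh)
          have hcu : ((c u : Fin n) : ℕ) ≠ 0 := by
            intro hh
            exact h' (c.injective (show c u = c u1 by rw [hu1]; exact Fin.ext hh))
          rw [rot_lt_iff _ _ hcu huv]
          constructor
          · intro hlt; right; exact ⟨h', hlt⟩
          · rintro (hh | ⟨_, hlt⟩)
            · exact absurd hh h
            · exact hlt
    rw [hset]
    have hmem : u1 ∈ Finset.univ.filter (fun u : Fin n => c u < u) := by
      simp only [Finset.mem_filter, Finset.mem_univ, true_and]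
      rw [hu1, Fin.lt_def]
      simpa using Nat.pos_of_ne_zero hu1ne
    rw [Finset.card_insert_of_notMem, Finset.card_erase_of_mem hmem]
    · have hpos : 0 < (Finset.univ.filter (fun u : Fin n => c u < u)).card :=
        Finset.card_pos.mpr ⟨u1, hmem⟩
      omega
    · simp only [Finset.mem_erase, Finset.mem_filter, Finset.mem_univ, true_and]
      rintro ⟨-, hlt⟩
      exact absurd hlt (by simp [Fin.lt_def])


lemma casc_conj {n : ℕ} (hn : 2 ≤ n) (h0n : 0 < n) (hn1 : n - 1 < n) (c : Equiv.Perm (Fin n))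
    (h1 : c ⟨0, h0n⟩ ≠ ⟨n-1, hn1⟩) (h2 : c ⟨n-1, hn1⟩ ≠ ⟨0, h0n⟩) :
    casc (rot n * c * (rot n)⁻¹) = casc c := by
  have hinv : (rot n * c * (rot n)⁻¹)⁻¹ = rot n * c⁻¹ * (rot n)⁻¹ := by group
  rw [casc_eq_cdes_inv, hinv, casc_eq_cdes_inv]
  apply cdes_conj hn h0n hn1
  · intro h
    apply h2
    rw [← h, Equiv.Perm.inv_def, Equiv.apply_symm_apply]
  · intro h
    apply h1
    rw [← h, Equiv.Perm.inv_def, Equiv.apply_symm_apply]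

lemma Mstat_conj {n : ℕ} (hn : 2 ≤ n) (h0n : 0 < n) (hn1 : n - 1 < n) (π : Equiv.Perm (Fin n))
    (h1 : π ⟨0, h0n⟩ ≠ ⟨n-1, hn1⟩) (h2 : π ⟨n-1, hn1⟩ ≠ ⟨0, h0n⟩) :
    Mstat (rot n * π * (rot n)⁻¹) = Mstat π := by
  unfold Mstat
  have hf : (rot n * π * (rot n)⁻¹).cycleFactorsFinset =
      Finset.map (MulAut.conj (rot n)).toEquiv.toEmbedding π.cycleFactorsFinset := by
    have := Equiv.Perm.cycleFactorsFinset_conj π (rot n)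
    rwa [ConjAct.smul_def, ConjAct.ofConjAct_toConjAct] at this
  rw [hf, Finset.sum_map]
  apply Finset.sum_congr rfl
  intro c hc
  have hcmem := (Equiv.Perm.mem_cycleFactorsFinset_iff.mp hc).2
  have hc1 : c ⟨0, h0n⟩ ≠ ⟨n-1, hn1⟩ := by
    by_cases hs : (⟨0, h0n⟩ : Fin n) ∈ c.support
    · rw [hcmem _ hs]; exact h1
    · rw [Equiv.Perm.notMem_support.mp hs]
      intro h
      have := congrArg Fin.val h
      simp only [Fin.val_mk] at this
      omega
  have hc2 : c ⟨n-1, hn1⟩ ≠ ⟨0, h0n⟩ := by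
    by_cases hs : (⟨n-1, hn1⟩ : Fin n) ∈ c.support
    · rw [hcmem _ hs]; exact h2
    · rw [Equiv.Perm.notMem_support.mp hs]
      intro h
      have := congrArg Fin.val h
      simp only [Fin.val_mk] at this
      omega
  simp only [MulEquiv.toEquiv_eq_coe, Equiv.coe_toEmbedding, MulEquiv.coe_toEquiv,
    MulAut.conj_apply]
  rw [cdes_conj hn h0n hn1 c hc1 hc2, casc_conj hn h0n hn1 c hc1 hc2]



lemma hcf_iff (n i j : ℕ) (π : Equiv.Perm (Fin n)) (hi : 1 ≤ i) (hj : 1 ≤ j)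
    (hix : i - 1 < n) (hjx : j - 1 < n) (hnx : n - 1 < n) :
    HasCyclicFactor n π i n j ↔
      π ⟨i-1, hix⟩ = ⟨n-1, hnx⟩ ∧ π ⟨n-1, hnx⟩ = ⟨j-1, hjx⟩ := by
  constructor
  · rintro ⟨x, y, z, hx, hy, hz, hxy, hyz⟩
    have hxe : x = ⟨i-1, hix⟩ := Fin.ext (by simp only [Fin.val_mk]; omega)
    have hye : y = ⟨n-1, hnx⟩ := Fin.ext (by simp only [Fin.val_mk]; omega)
    have hze : z = ⟨j-1, hjx⟩ := Fin.ext (by simp only [Fin.val_mk]; omega)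
    subst hxe
    subst hye
    subst hze
    exact ⟨hxy, hyz⟩
  · rintro ⟨ha, hb⟩
    exact ⟨⟨i-1, hix⟩, ⟨n-1, hnx⟩, ⟨j-1, hjx⟩,
      by simp only [Fin.val_mk]; omega, by simp only [Fin.val_mk]; omega,
      by simp only [Fin.val_mk]; omega, ha, hb⟩

lemma count_shift (n d i j : ℕ) (h2i : 2 ≤ i) (hij : i < j) (hjn : j + 1 ≤ n) :
    oddOrderCyclicCount n d i j = oddOrderCyclicCount n d (i-1) (j-1) := by
  have hn : 2 ≤ n := by omega
  have hi1 : i - 1 < n := by omega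
  have hi2 : i - 1 - 1 < n := by omega
  have hn1 : n - 1 < n := by omega
  have hj1 : j - 1 < n := by omega
  have hj2 : j - 1 - 1 < n := by omega
  have h0n : 0 < n := by omega
  have e1 : rot n ⟨i-1, hi1⟩ = ⟨i-1-1, hi2⟩ :=
    Fin.ext (by rw [rot_val]; simp only [Fin.val_mk]; split_ifs <;> omega)
  have e2 : rot n ⟨n-1, hn1⟩ = ⟨n-1, hn1⟩ :=
    Fin.ext (by rw [rot_val]; simp only [Fin.val_mk]; split_ifs <;> omega)
  have e3 : rot n ⟨j-1, hj1⟩ = ⟨j-1-1, hj2⟩ :=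
    Fin.ext (by rw [rot_val]; simp only [Fin.val_mk]; split_ifs <;> omega)
  have e1' : (rot n)⁻¹ ⟨i-1-1, hi2⟩ = ⟨i-1, hi1⟩ :=
    (Equiv.Perm.inv_eq_iff_eq).mpr e1.symm
  have e2' : (rot n)⁻¹ ⟨n-1, hn1⟩ = ⟨n-1, hn1⟩ :=
    (Equiv.Perm.inv_eq_iff_eq).mpr e2.symm
  have e3' : (rot n)⁻¹ ⟨j-1-1, hj2⟩ = ⟨j-1, hj1⟩ :=
    (Equiv.Perm.inv_eq_iff_eq).mpr e3.symm
  apply Nat.card_congr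
  refine ⟨fun p => ⟨rot n * p.1 * (rot n)⁻¹, ?_⟩,
    fun p => ⟨(rot n)⁻¹ * p.1 * rot n, ?_⟩, ?_, ?_⟩
  · obtain ⟨π, hodd, hM, hcf⟩ := p
    rw [hcf_iff n i j π (by omega) (by omega) hi1 hj1 hn1] at hcf
    obtain ⟨ha, hb⟩ := hcf
    have h1 : π ⟨0, h0n⟩ ≠ ⟨n-1, hn1⟩ := by
      intro h
      have := congrArg Fin.val (π.injective (h.trans ha.symm))
      simp only [Fin.val_mk] at this
      omega
    have h2 : π ⟨n-1, hn1⟩ ≠ ⟨0, h0n⟩ := by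
      rw [hb]
      intro h
      have := congrArg Fin.val h
      simp only [Fin.val_mk] at this
      omega
    refine ⟨?_, ?_, ?_⟩
    · intro m hm
      rw [Equiv.Perm.cycleType_conj] at hm
      exact hodd m hm
    · rw [Mstat_conj hn h0n hn1 π h1 h2]; exact hM
    · rw [hcf_iff n (i-1) (j-1) _ (by omega) (by omega) hi2 hj2 hn1]
      constructor
      · simp only [Equiv.Perm.mul_apply]
        rw [e1', ha, e2]
      · simp only [Equiv.Perm.mul_apply]
        rw [e2', hb, e3]
  · obtain ⟨π', hodd, hM, hcf⟩ := p
    rw [hcf_iff n (i-1) (j-1) π' (by omega) (by omega) hi2 hj2 hn1] at hcf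
    obtain ⟨ha, hb⟩ := hcf
    have hcfπ : HasCyclicFactor n ((rot n)⁻¹ * π' * rot n) i n j := by
      rw [hcf_iff n i j _ (by omega) (by omega) hi1 hj1 hn1]
      constructor
      · simp only [Equiv.Perm.mul_apply]
        rw [e1, ha, e2']
      · simp only [Equiv.Perm.mul_apply]
        rw [e2, hb, e3']
    have hgroup : rot n * ((rot n)⁻¹ * π' * rot n) * (rot n)⁻¹ = π' := by group
    have hcf2 := (hcf_iff n i j ((rot n)⁻¹ * π' * rot n)
      (by omega) (by omega) hi1 hj1 hn1).mp hcfπ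
    have h1 : ((rot n)⁻¹ * π' * rot n) ⟨0, h0n⟩ ≠ ⟨n-1, hn1⟩ := by
      intro h
      have := congrArg Fin.val (((rot n)⁻¹ * π' * rot n).injective (h.trans hcf2.1.symm))
      simp only [Fin.val_mk] at this
      omega
    have h2 : ((rot n)⁻¹ * π' * rot n) ⟨n-1, hn1⟩ ≠ ⟨0, h0n⟩ := by
      rw [hcf2.2]
      intro h
      have := congrArg Fin.val h
      simp only [Fin.val_mk] at this
      omega
    refine ⟨?_, ?_, hcfπ⟩
    · intro m hm
      apply hodd m
      rw [← hgroup]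
      rwa [Equiv.Perm.cycleType_conj]
    · have hm2 := Mstat_conj hn h0n hn1 _ h1 h2
      rw [hgroup] at hm2
      rw [← hm2]; exact hM
  · intro p
    apply Subtype.ext
    show (rot n)⁻¹ * (rot n * p.1 * (rot n)⁻¹) * rot n = p.1
    group
  · intro p
    apply Subtype.ext
    show rot n * ((rot n)⁻¹ * p.1 * rot n) * (rot n)⁻¹ = p.1
    group

lemma count_base (n d : ℕ) :
    ∀ i j, 1 ≤ i → i < j → j + 1 ≤ n →
      oddOrderCyclicCount n d i j = oddOrderCyclicCount n d 1 (j - i + 1) := by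
  intro i
  induction i with
  | zero => intro j h1 _ _; omega
  | succ k ih =>
    intro j h1 h2 h3
    rcases Nat.eq_zero_or_pos k with hk | hk
    · subst hk
      have : j - 1 + 1 = j := by omega
      rw [this]
    · have hs := count_shift n d (k+1) j (by omega) h2 h3
      have : k + 1 - 1 = k := by omega
      rw [this] at hs
      rw [hs, ih (j-1) (by omega) (by omega) (by omega)]
      congr 1
      omega

lemma coeff_X_mul' (s : Fin 3) (f : PS3) (e : Fin 3 →₀ ℕ) :
    MvPowerSeries.coeff e (MvPowerSeries.X s * f) =
      if 1 ≤ e s then MvPowerSeries.coeff (e - Finsupp.single s 1) f else 0 := by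
  rw [MvPowerSeries.X_def, MvPowerSeries.coeff_monomial_mul]
  simp [Finsupp.single_le_iff]

theorem PGF4_eq :
    (1 - MvPowerSeries.X 1 * MvPowerSeries.X 2) * PGF4 =
      2 * MvPowerSeries.X 1 * (PGF2 - QGF) := by
  have hring : (1 - MvPowerSeries.X 1 * MvPowerSeries.X 2) * PGF4 =
      PGF4 - MvPowerSeries.X 1 * (MvPowerSeries.X 2 * PGF4) := by ring
  have hring2 : 2 * MvPowerSeries.X 1 * (PGF2 - QGF) =
      MvPowerSeries.X 1 * (PGF2 - QGF) + MvPowerSeries.X 1 * (PGF2 - QGF) := by ring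
  rw [hring, hring2]
  apply MvPowerSeries.ext
  intro e
  rw [map_sub, map_add, coeff_X_mul', coeff_X_mul', coeff_X_mul', map_sub]
  have h10 : ((e - Finsupp.single 1 1 : Fin 3 →₀ ℕ)) 0 = e 0 := by
    rw [Finsupp.tsub_apply]; simp
  have h11 : ((e - Finsupp.single 1 1 : Fin 3 →₀ ℕ)) 1 = e 1 - 1 := by
    rw [Finsupp.tsub_apply]; simp
  have h12 : ((e - Finsupp.single 1 1 : Fin 3 →₀ ℕ)) 2 = e 2 := by
    rw [Finsupp.tsub_apply]; simp
  have h20 : ((e - Finsupp.single 1 1 - Finsupp.single 2 1 : Fin 3 →₀ ℕ)) 0 = e 0 := by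
    rw [Finsupp.tsub_apply, h10]; simp
  have h21 : ((e - Finsupp.single 1 1 - Finsupp.single 2 1 : Fin 3 →₀ ℕ)) 1 = e 1 - 1 := by
    rw [Finsupp.tsub_apply, h11]; simp
  have h22 : ((e - Finsupp.single 1 1 - Finsupp.single 2 1 : Fin 3 →₀ ℕ)) 2 = e 2 - 1 := by
    rw [Finsupp.tsub_apply, h12]; simp
  simp only [MvPowerSeries.coeff_apply, PGF4, PGF2, QGF, h10, h11, h12, h20, h21, h22]
  split_ifs with hA hB hC hD hE hF <;> try omega
  all_goals try (norm_num; done)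
  all_goals
    first
    | -- interior case: shift invariance
      (have r1 : e 2 - 1 - (e 1 - 1) - 1 = e 2 - e 1 - 1 := by omega
       have r2 : e 0 - (e 2 - 1) + (e 1 - 1) - 2 = e 0 - e 2 + e 1 - 2 := by omega
       have hcs : ∀ d, oddOrderCyclicCount (e 0) d (e 1) (e 2)
           = oddOrderCyclicCount (e 0) d (e 1 - 1) (e 2 - 1) :=
         fun d => count_shift (e 0) d (e 1) (e 2) (by omega) (by omega) (by omega)
       rw [r1, r2]
       simp only [sub_zero, add_zero]
       rw [sub_eq_zero]
       congr 1
       exact Finset.sum_congr rfl fun d _ => by rw [hcs d])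
    | -- i = 1 case
      (have he1 : e 1 = 1 := by omega
       rw [he1]
       simp only [sub_zero]
       have r1 : e 2 - 1 - 1 = e 2 - 2 := by omega
       have r2 : e 0 - e 2 + 1 - 2 = e 0 - e 2 - 1 := by omega
       rw [r1, r2, ← smul_add, ← Finset.sum_add_distrib]
       congr 1
       refine Finset.sum_congr rfl fun d _ => ?_
       push_cast
       ring)
    | -- j = n case
      (have he2 : e 2 = e 0 := by omega
       rw [he2]
       simp only [zero_sub]
       rw [← neg_add, neg_inj]
       have r1 : e 0 - 1 - (e 1 - 1) - 1 = e 0 - (e 1 - 1) - 2 := by omega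
       have r2 : e 0 - (e 0 - 1) + (e 1 - 1) - 2 = e 1 - 1 - 1 := by omega
       rw [r1, r2]
       have hcb : ∀ d, oddOrderCyclicCount (e 0) d (e 1 - 1) (e 0 - 1)
           = oddOrderCyclicCount (e 0) d 1 (e 0 - (e 1 - 1)) := by
         intro d
         have hb := count_base (e 0) d (e 1 - 1) (e 0 - 1) (by omega) (by omega) (by omega)
         rwa [show e 0 - 1 - (e 1 - 1) + 1 = e 0 - (e 1 - 1) by omega] at hb
       rw [← smul_add, ← Finset.sum_add_distrib]
       congr 1
       refine Finset.sum_congr rfl fun d _ => ?_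
       rw [hcb d]
       push_cast
       ring)
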